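/- Let A be an augmented graded algebra over a commutative ring k with augmentation ideal Ā. On the tensor coalgebra TC(Ā), the product obtained by tensorization of the algebra A admits the following combinatorial description: μ([a_1|…|a_p] ⊗ [b_1|…|b_q]) = Σ_σ ± c_σ, where the sum runs over all step-by-step lattice paths σ from (0,0) to (p,q) (paths whose steps increase x by 1, y by 1, or both by 1), c_σ is obtained by placing a_{x_i} for a right step, b_{y_i} for an up step, and the product a_{x_i}b_{y_i} for a diagonal step, and ± is the Koszul sign obtained by mixing the a's and b's. -/

import Mathlib

open scoped Classical


/-!
STATEMENT 11.  Let `A = k ⊕ Ā` be an augmented graded algebra; we model the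
augmentation ideal `Ā` as the free module on a basis `B` with degrees
`deg : B → ℤ` and product structure constants `m : B → B → (B →₀ k)`
(note `Ā·Ā ⊆ Ā`).  The tensor coalgebra `TC(Ā)` is the free module on words
`List B` with the deconcatenation coproduct.  The product on `TC(Ā)` obtained
by tensorization of the algebra `A` — i.e. the unique morphism of coaugmented
coalgebras `TC(Ā) ⊗ TC(Ā) → TC(Ā)` lifting the composite
`TC(Ā) ⊗ TC(Ā) ↠ A ⊗ A → A` — is given by the step-by-step lattice path
formula: `μ([a₁|…|a_p] ⊗ [b₁|…|b_q]) = Σ_σ ± c_σ`, summing over paths from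
`(0,0)` to `(p,q)` with right, up and diagonal steps, a diagonal step
contributing the product `a_i·b_j`, with Koszul signs.  When the product of
`Ā` is trivial this is the shuffle product.
-/

def sgn (m : ℤ) : ℤ := if Even m then 1 else -1

def degW {B : Type*} (deg : B → ℤ) (l : List B) : ℤ := (l.map deg).sum

/-- The step-by-step path product on words: right steps, up steps (with
Koszul sign) and diagonal steps multiplying the two letters. -/
noncomputable def pathProd (k : Type*) {B : Type*} [CommRing k] (deg : B → ℤ)
    (m : B → B → (B →₀ k)) : List B → List B → (List B →₀ k)
  | [], l => Finsupp.single l 1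
  | a :: x, [] => Finsupp.single (a :: x) 1
  | a :: x, b :: y =>
      (pathProd k deg m x (b :: y)).mapDomain (a :: ·)
      + sgn (deg b * (deg a + degW deg x)) •
          (pathProd k deg m (a :: x) y).mapDomain (b :: ·)
      + sgn (deg b * degW deg x) •
          ((m a b).sum fun c coef =>
            coef • (pathProd k deg m x y).mapDomain (c :: ·))
  termination_by x y => x.length + y.length

/-- The shuffle product (the path product without diagonal steps). -/
noncomputable def shuffle (k : Type*) {B : Type*} [CommRing k] (deg : B → ℤ) :
    List B → List B → (List B →₀ k)
  | [], l => Finsupp.single l 1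
  | a :: x, [] => Finsupp.single (a :: x) 1
  | a :: x, b :: y =>
      (shuffle k deg x (b :: y)).mapDomain (a :: ·)
      + sgn (deg b * (deg a + degW deg x)) •
          (shuffle k deg (a :: x) y).mapDomain (b :: ·)
  termination_by x y => x.length + y.length

noncomputable def deconcat (k : Type*) {B : Type*} [CommRing k] :
    List B → ((List B × List B) →₀ k)
  | [] => Finsupp.single ([], []) 1
  | a :: l => Finsupp.single ([], a :: l) 1
      + (deconcat k l).mapDomain fun p => (a :: p.1, p.2)

noncomputable def deconcatF {k B : Type*} [CommRing k] (f : List B →₀ k) :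
    (List B × List B) →₀ k :=
  f.sum fun l c => c • deconcat k l

/-- A bilinear product on words applied componentwise to pairs, with the
Koszul interchange sign: the product on `TC(Ā) ⊗ TC(Ā)`. -/
noncomputable def pairProd {k B : Type*} [CommRing k] (deg : B → ℤ)
    (μ : List B → List B → (List B →₀ k))
    (f g : (List B × List B) →₀ k) : (List B × List B) →₀ k :=
  f.sum fun p c => g.sum fun q c' =>
    (c * c' * sgn (degW deg p.2 * degW deg q.1)) •
      ((μ p.1 q.1).sum fun u cu => (μ p.2 q.2).sum fun v cv =>
        (cu * cv) • Finsupp.single (u, v) 1)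

/-- The projection `TC(Ā) ⊗ TC(Ā) ↠ A ⊗ A → A` on a pair of basis words,
recorded as an element of `A = k ⊕ Ā` (`none` is the unit coordinate). -/
noncomputable def projMul {k B : Type*} [CommRing k] (m : B → B → (B →₀ k)) :
    List B → List B → (Option B →₀ k)
  | [], [] => Finsupp.single none 1
  | [], [b] => Finsupp.single (some b) 1
  | [a], [] => Finsupp.single (some a) 1
  | [a], [b] => (m a b).mapDomain some
  | _, _ => 0




section
variable {k B : Type*} [CommRing k] (deg : B → ℤ)

lemma sgn_zero : sgn 0 = 1 := by simp [sgn]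

lemma sgn_add (a b : ℤ) : sgn (a + b) = sgn a * sgn b := by
  simp only [sgn, Int.even_add]
  by_cases ha : Even a <;> by_cases hb : Even b <;> simp [ha, hb]

/-- cast of sign into k -/
def sk (z : ℤ) : k := ((sgn z : ℤ) : k)

lemma sk_zero : (sk 0 : k) = 1 := by simp [sk, sgn_zero]

lemma sk_add (a b : ℤ) : (sk (a+b) : k) = sk a * sk b := by
  simp [sk, sgn_add]

lemma sk_eq_sk {a b : ℤ} (h : Even (a - b)) : (sk a : k) = sk b := by
  have : Even a ↔ Even b := Int.even_sub.mp h
  simp [sk, sgn, this]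

lemma sgn_smul_eq (z : ℤ) (f : List B →₀ k) : sgn z • f = (sk z : k) • f := by
  rw [sk, Int.cast_smul_eq_zsmul]

lemma degW_cons (a : B) (l : List B) : degW deg (a :: l) = deg a + degW deg l := by
  simp [degW]

lemma degW_nil : degW deg ([] : List B) = 0 := rfl

lemma degW_append (u v : List B) : degW deg (u ++ v) = degW deg u + degW deg v := by
  simp [degW]

end



section
variable {k B : Type*} [CommRing k] (deg : B → ℤ)

lemma mapDomain_cons_nil (f : List B →₀ k) (a : B) : (f.mapDomain (a :: ·)) [] = 0 := by
  apply Finsupp.mapDomain_notin_range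
  rintro ⟨t, ht⟩; simp at ht

lemma mapDomain_cons_cons (f : List B →₀ k) (a : B) (w : List B) :
    (f.mapDomain (a :: ·)) (a :: w) = f w :=
  Finsupp.mapDomain_apply (fun l l' h => by simpa using h) f w

lemma mapDomain_cons_ne (f : List B →₀ k) (a c : B) (w : List B) (h : c ≠ a) :
    (f.mapDomain (a :: ·)) (c :: w) = 0 := by
  apply Finsupp.mapDomain_notin_range
  rintro ⟨t, ht⟩; simp_all

lemma deconcat_apply (l : List B) (u v : List B) :
    (deconcat k l) (u, v) = if u ++ v = l then (1:k) else 0 := by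
  induction l generalizing u with
  | nil =>
    rw [deconcat, Finsupp.single_apply]
    cases u <;> simp [Prod.ext_iff, eq_comm]
  | cons a t ih =>
    rw [deconcat]
    rw [Finsupp.add_apply, Finsupp.single_apply]
    cases u with
    | nil =>
      have h0 : ((([], a :: t) : List B × List B) = ([], v)) ↔ (v = a :: t) := by
        simp [eq_comm]
      rw [Finsupp.mapDomain_notin_range]
      · simp only [h0]
        simp [eq_comm]
      · rintro ⟨p, hp⟩
        simp [Prod.ext_iff] at hp
    | cons c u' =>
      have h0 : ¬ ((([], a :: t) : List B × List B) = (c :: u', v)) := by simp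
      rw [if_neg h0, zero_add]
      by_cases hca : c = a
      · subst c
        have : ((a :: u', v) : List B × List B) = (fun p : List B × List B => (a :: p.1, p.2)) (u', v) := rfl
        rw [this, Finsupp.mapDomain_apply, ih]
        · simp
        · rintro ⟨p1, p2⟩ ⟨q1, q2⟩ h
          simpa [Prod.ext_iff] using h
      · rw [Finsupp.mapDomain_notin_range]
        · simp [hca]
        · rintro ⟨p, hp⟩
          simp [Prod.ext_iff] at hp
          exact hca hp.1.1.symm

lemma deconcatF_apply (f : List B →₀ k) (u v : List B) :
    (deconcatF f) (u, v) = f (u ++ v) := by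
  rw [deconcatF, Finsupp.sum_apply]
  rw [Finsupp.sum]
  have : ∀ l ∈ f.support, (f l • deconcat k l) (u, v)
      = if l = u ++ v then f l else 0 := by
    intro l _
    rw [Finsupp.smul_apply, deconcat_apply]
    by_cases h : u ++ v = l
    · subst h; simp
    · rw [if_neg h, if_neg (fun hh => h hh.symm)]; simp
  rw [Finset.sum_congr rfl this, Finset.sum_ite_eq' f.support (u++v) (fun l => f l)]
  split
  · rfl
  · next h => exact (Finsupp.notMem_support_iff.mp h).symm

section
variable {k B : Type*} [CommRing k] (deg : B → ℤ)

lemma fsum_eq_single {α : Type*} (f : α →₀ k) (a0 : α) {F : α → k → k}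
    (h0 : F a0 0 = 0) (hne : ∀ a ∈ f.support, a ≠ a0 → F a (f a) = 0) :
    f.sum F = F a0 (f a0) := by
  rw [Finsupp.sum]
  apply Finset.sum_eq_single a0 hne
  intro h
  rw [Finsupp.notMem_support_iff.mp h, h0]

noncomputable def tp (f g : List B →₀ k) : (List B × List B) →₀ k :=
  f.sum fun u cu => g.sum fun v cv => (cu * cv) • Finsupp.single (u, v) 1

lemma tp_apply (f g : List B →₀ k) (u v : List B) : tp f g (u, v) = f u * g v := by
  rw [tp, Finsupp.sum_apply]
  have inner : ∀ (u' : List B) (cu : k),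
      (g.sum fun v' cv => (cu * cv) • Finsupp.single (u', v') (1:k)) (u, v)
      = if u' = u then cu * g v else 0 := by
    intro u' cu
    rw [Finsupp.sum_apply]
    refine (fsum_eq_single g v ?_ ?_).trans ?_
    · simp
    · intro v' _ hnev
      rw [Finsupp.smul_apply, Finsupp.single_apply,
        if_neg (by simp [Prod.ext_iff]; tauto), smul_zero]
    · rw [Finsupp.smul_apply, Finsupp.single_apply]
      by_cases h : u' = u
      · subst h; simp
      · rw [if_neg (by simp [Prod.ext_iff]; tauto), smul_zero, if_neg h]
  have h1 : ∀ u' ∈ f.support, (fun (u' : List B) (cu : k) =>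
      (g.sum fun v' cv => (cu * cv) • Finsupp.single (u', v') (1:k)) (u, v)) u' (f u')
      = (fun (u' : List B) (cu : k) => if u' = u then cu * g v else 0) u' (f u') := by
    intro u' _
    exact inner u' (f u')
  rw [Finsupp.sum_congr (g2 := fun (u' : List B) (cu : k) => if u' = u then cu * g v else 0) h1]
  refine (fsum_eq_single f u ?_ ?_).trans ?_
  · simp
  · intro a _ ha; rw [if_neg ha]
  · rw [if_pos rfl]

end

/-- sum of a k-valued fn over a list -/
def LS {α : Type*} (l : List α) (f : α → k) : k := (l.map f).sum

section LS
variable {α β : Type*}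

@[simp] lemma LS_nil (f : α → k) : LS ([] : List α) f = 0 := rfl

@[simp] lemma LS_cons (a : α) (l : List α) (f : α → k) :
    LS (a :: l) f = f a + LS l f := rfl

@[simp] lemma LS_map (h : β → α) (l : List β) (f : α → k) :
    LS (l.map h) f = LS l (f ∘ h) := by
  simp [LS, List.map_map]

lemma LS_congr {l : List α} {f g : α → k} (h : ∀ x ∈ l, f x = g x) :
    LS l f = LS l g := by
  induction l with
  | nil => rfl
  | cons a t ih =>
    simp only [LS_cons, h a (by simp)]
    rw [ih fun x hx => h x (by simp [hx])]

lemma LS_add (l : List α) (f g : α → k) :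
    LS l (fun x => f x + g x) = LS l f + LS l g := by
  induction l with
  | nil => simp
  | cons a t ih => simp only [LS_cons, ih]; ring

lemma LS_mul_left (l : List α) (c : k) (f : α → k) :
    LS l (fun x => c * f x) = c * LS l f := by
  induction l with
  | nil => simp
  | cons a t ih => simp only [LS_cons, ih]; ring

lemma LS_zero (l : List α) : LS l (fun _ => (0:k)) = 0 := by
  induction l with
  | nil => simp
  | cons a t ih => simp [ih]

end LS

/-- all two-part splittings of a word -/
def Spl : List B → List (List B × List B)
  | [] => [([], [])]
  | a :: l => ([], a :: l) :: (Spl l).map (fun p => (a :: p.1, p.2))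

lemma Spl_append {x : List B} {p : List B × List B} (hp : p ∈ Spl x) :
    p.1 ++ p.2 = x := by
  induction x generalizing p with
  | nil => simp [Spl] at hp; simp [hp]
  | cons a t ih =>
    simp only [Spl, List.mem_cons, List.mem_map] at hp
    rcases hp with h | ⟨q, hq, rfl⟩
    · simp [h]
    · simpa using ih hq

lemma Spl_degW {x : List B} {p : List B × List B} (hp : p ∈ Spl x) :
    degW deg p.1 + degW deg p.2 = degW deg x := by
  rw [← Spl_append hp, degW_append]

end



section
variable {k B : Type*} [CommRing k] (deg : B → ℤ)

lemma deconcat_sum_k (x : List B) (G : List B × List B → k) :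
    ((deconcat k x).sum fun p c => c * G p) = LS (Spl x) G := by
  induction x generalizing G with
  | nil =>
    rw [deconcat, Finsupp.sum_single_index (by simp)]
    simp [Spl]
  | cons a l ih =>
    rw [deconcat, Finsupp.sum_add_index' (fun p => by simp) (fun p c1 c2 => add_mul c1 c2 (G p))]
    rw [Finsupp.sum_single_index (by simp), one_mul]
    rw [Finsupp.sum_mapDomain_index (fun p => by simp)
      (fun p c1 c2 => add_mul c1 c2 (G p))]
    rw [ih (fun p => G (a :: p.1, p.2))]
    simp only [Spl, LS_cons, LS_map]
    rfl

lemma pairProd_eq_tp (μ : List B → List B → (List B →₀ k))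
    (f g : (List B × List B) →₀ k) :
    pairProd deg μ f g = f.sum fun p c => g.sum fun q c' =>
      (c * c' * (sgn (degW deg p.2 * degW deg q.1) : ℤ)) •
        tp (μ p.1 q.1) (μ p.2 q.2) := rfl

lemma pairProd_deconcat_apply (μ : List B → List B → (List B →₀ k))
    (x y u v : List B) :
    (pairProd deg μ (deconcat k x) (deconcat k y)) (u, v)
    = LS (Spl x) fun p => LS (Spl y) fun q =>
        (sk (degW deg p.2 * degW deg q.1) : k) * (μ p.1 q.1 u * μ p.2 q.2 v) := by
  rw [pairProd_eq_tp, Finsupp.sum_apply]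
  have step1 : ∀ (p : List B × List B) (c : k),
      ((deconcat k y).sum fun q c' =>
        (c * c' * (sgn (degW deg p.2 * degW deg q.1) : ℤ)) •
          tp (μ p.1 q.1) (μ p.2 q.2)) (u, v)
      = c * LS (Spl y) (fun q =>
          (sk (degW deg p.2 * degW deg q.1) : k) * (μ p.1 q.1 u * μ p.2 q.2 v)) := by
    intro p c
    rw [Finsupp.sum_apply]
    have e1 : ∀ (q : List B × List B) (c' : k),
        ((c * c' * (sgn (degW deg p.2 * degW deg q.1) : ℤ)) •
          tp (μ p.1 q.1) (μ p.2 q.2)) (u, v)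
        = c' * (c * ((sk (degW deg p.2 * degW deg q.1) : k) * (μ p.1 q.1 u * μ p.2 q.2 v))) := by
      intro q c'
      rw [Finsupp.smul_apply, tp_apply, smul_eq_mul, sk]
      push_cast
      ring
    rw [Finsupp.sum_congr (g2 := fun q c' => c' * (c *
        ((sk (degW deg p.2 * degW deg q.1) : k) * (μ p.1 q.1 u * μ p.2 q.2 v))))
      (fun q _ => e1 q _)]
    rw [deconcat_sum_k, LS_mul_left]
  rw [Finsupp.sum_congr (g2 := fun p c => c * LS (Spl y) (fun q =>
      (sk (degW deg p.2 * degW deg q.1) : k) * (μ p.1 q.1 u * μ p.2 q.2 v)))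
    (fun p _ => step1 p _)]
  rw [deconcat_sum_k]

lemma deconcatF_single (x : List B) :
    deconcatF (Finsupp.single x (1:k)) = deconcat k x := by
  rw [deconcatF, Finsupp.sum_single_index (by simp), one_smul]

end

section
variable {k B : Type*} [CommRing k] (deg : B → ℤ) (m : B → B → (B →₀ k))

lemma P_nil_left (y : List B) : pathProd k deg m [] y = Finsupp.single y 1 := by
  rw [pathProd]

lemma P_nil_right (x : List B) : pathProd k deg m x [] = Finsupp.single x 1 := by
  cases x <;> rw [pathProd]

lemma P_cons_cons (a b : B) (x y : List B) :
    pathProd k deg m (a :: x) (b :: y) =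
      (pathProd k deg m x (b :: y)).mapDomain (a :: ·)
      + sgn (deg b * (deg a + degW deg x)) •
          (pathProd k deg m (a :: x) y).mapDomain (b :: ·)
      + sgn (deg b * degW deg x) •
          ((m a b).sum fun c coef =>
            coef • (pathProd k deg m x y).mapDomain (c :: ·)) := by
  rw [pathProd]

lemma P_apply_nil (x y : List B) :
    pathProd k deg m x y [] = if x = [] ∧ y = [] then (1:k) else 0 := by
  match x, y with
  | [], y => rw [P_nil_left, Finsupp.single_apply]; cases y <;> simp
  | a::x, [] => rw [P_nil_right, Finsupp.single_apply]; simp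
  | a::x, b::y =>
    rw [P_cons_cons, Finsupp.add_apply, Finsupp.add_apply, Finsupp.smul_apply,
      Finsupp.smul_apply, mapDomain_cons_nil, mapDomain_cons_nil]
    rw [Finsupp.sum_apply, Finsupp.sum_congr (g2 := fun _ _ => (0:k))
      (fun c _ => by rw [Finsupp.smul_apply, mapDomain_cons_nil, smul_zero])]
    simp

lemma P_cons_cons_apply (a b c : B) (x y w : List B) :
    pathProd k deg m (a::x) (b::y) (c :: w)
    = (if c = a then pathProd k deg m x (b::y) w else 0)
      + (sk (deg b * (deg a + degW deg x)) : k) *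
          (if c = b then pathProd k deg m (a::x) y w else 0)
      + (sk (deg b * degW deg x) : k) * ((m a b) c * pathProd k deg m x y w) := by
  rw [P_cons_cons, Finsupp.add_apply, Finsupp.add_apply, Finsupp.smul_apply,
    Finsupp.smul_apply]
  have t1 : (Finsupp.mapDomain (a :: ·) (pathProd k deg m x (b::y))) (c::w)
      = if c = a then pathProd k deg m x (b::y) w else 0 := by
    by_cases h : c = a
    · subst h; rw [if_pos rfl, mapDomain_cons_cons]
    · rw [if_neg h, mapDomain_cons_ne _ _ _ _ h]
  have t2 : (Finsupp.mapDomain (b :: ·) (pathProd k deg m (a::x) y)) (c::w)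
      = if c = b then pathProd k deg m (a::x) y w else 0 := by
    by_cases h : c = b
    · subst h; rw [if_pos rfl, mapDomain_cons_cons]
    · rw [if_neg h, mapDomain_cons_ne _ _ _ _ h]
  have t3 : ((m a b).sum fun c' coef =>
        coef • Finsupp.mapDomain (c' :: ·) (pathProd k deg m x y)) (c::w)
      = (m a b) c * pathProd k deg m x y w := by
    rw [Finsupp.sum_apply]
    refine (fsum_eq_single (m a b) c ?_ ?_).trans ?_
    · simp
    · intro c' _ hne
      rw [Finsupp.smul_apply, mapDomain_cons_ne _ _ _ _ (Ne.symm hne), smul_zero]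
    · rw [Finsupp.smul_apply, mapDomain_cons_cons, smul_eq_mul]
  rw [t1, t2, t3, zsmul_eq_mul, zsmul_eq_mul]
  rfl

end

section
variable {k B : Type*} [CommRing k] (deg : B → ℤ) (m : B → B → (B →₀ k))

lemma spl_indicator (y u v : List B) :
    LS (Spl y) (fun q => (if q.1 = u then (1:k) else 0) * (if q.2 = v then 1 else 0))
      = if u ++ v = y then 1 else 0 := by
  induction y generalizing u with
  | nil =>
    simp only [Spl, LS_cons, LS_nil, add_zero]
    cases u <;> simp [eq_comm]
  | cons b y' ih =>
    simp only [Spl, LS_cons, LS_map]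
    cases u with
    | nil =>
      have : LS (Spl y') ((fun (q : List B × List B) =>
          (if q.1 = ([]:List B) then (1:k) else 0) * (if q.2 = v then 1 else 0)) ∘
            fun p => (b :: p.1, p.2)) = 0 := by
        refine (LS_congr ?_).trans (LS_zero (Spl y'))
        intro q _
        simp [Function.comp]
      rw [this, add_zero]
      simp [eq_comm]
    | cons c u' =>
      have h1 : (if ([] : List B) = c :: u' then (1:k) else 0) * (if b :: y' = v then 1 else 0) = 0 := by
        simp
      rw [h1, zero_add]
      by_cases hc : c = b
      · subst hc
        have : LS (Spl y') ((fun (q : List B × List B) =>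
            (if q.1 = c :: u' then (1:k) else 0) * (if q.2 = v then 1 else 0)) ∘
              fun p => (c :: p.1, p.2))
            = LS (Spl y') (fun q => (if q.1 = u' then (1:k) else 0) * (if q.2 = v then 1 else 0)) := by
          apply LS_congr
          intro q _
          simp [Function.comp]
        rw [this, ih]
        simp
      · have : LS (Spl y') ((fun (q : List B × List B) =>
            (if q.1 = c :: u' then (1:k) else 0) * (if q.2 = v then 1 else 0)) ∘
              fun p => (b :: p.1, p.2)) = 0 := by
          refine (LS_congr ?_).trans (LS_zero (Spl y'))
          intro q _
          simp only [Function.comp]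
          have : ¬ ((b :: q.1 : List B) = c :: u') := by
            intro h
            exact hc (by injection h with h1 _; exact h1.symm)
          simp [this]
        rw [this]
        simp [hc, fun h : c = b => hc h]

/-- the splitting sum -/
noncomputable def Sg (μ : List B → List B → (List B →₀ k)) (x y u v : List B) : k :=
  LS (Spl x) fun p => LS (Spl y) fun q =>
    (sk (degW deg p.2 * degW deg q.1) : k) * (μ p.1 q.1 u * μ p.2 q.2 v)

end

section
variable {k B : Type*} [CommRing k] (deg : B → ℤ) (m : B → B → (B →₀ k))

lemma MAIN_nil_left (y u v : List B) :
    pathProd k deg m [] y (u ++ v) = Sg deg (pathProd k deg m) [] y u v := by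
  rw [Sg]
  simp only [Spl, LS_cons, LS_nil, add_zero]
  rw [P_nil_left, Finsupp.single_apply]
  have h : LS (Spl y) (fun q => (sk (degW deg (([],[]) : List B × List B).2 * degW deg q.1) : k) *
      (pathProd k deg m (([],[]) : List B × List B).1 q.1 u *
        pathProd k deg m (([],[]) : List B × List B).2 q.2 v))
      = LS (Spl y) (fun q => (if q.1 = u then (1:k) else 0) * (if q.2 = v then 1 else 0)) := by
    apply LS_congr
    intro q _
    rw [P_nil_left, P_nil_left, Finsupp.single_apply, Finsupp.single_apply]
    have : degW deg (([],[]) : List B × List B).2 = 0 := rfl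
    rw [this, zero_mul, sk_zero, one_mul]
  rw [h, spl_indicator]
  simp [eq_comm]

lemma MAIN_nil_right (a : B) (x u v : List B) :
    pathProd k deg m (a :: x) [] (u ++ v) = Sg deg (pathProd k deg m) (a :: x) [] u v := by
  rw [Sg]
  rw [P_nil_right, Finsupp.single_apply]
  have h : LS (Spl (a :: x)) (fun p => LS (Spl ([] : List B)) fun q =>
      (sk (degW deg p.2 * degW deg q.1) : k) *
        (pathProd k deg m p.1 q.1 u * pathProd k deg m p.2 q.2 v))
      = LS (Spl (a :: x)) (fun p => (if p.1 = u then (1:k) else 0) * (if p.2 = v then 1 else 0)) := by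
    apply LS_congr
    intro p _
    show (sk (degW deg p.2 * degW deg (([],[]) : List B × List B).1) : k) *
        (pathProd k deg m p.1 [] u * pathProd k deg m p.2 [] v) + 0 = _
    rw [add_zero, P_nil_right, P_nil_right, Finsupp.single_apply, Finsupp.single_apply]
    have : degW deg (([],[]) : List B × List B).1 = 0 := rfl
    rw [this, mul_zero, sk_zero, one_mul]
  rw [h, spl_indicator]
  simp [eq_comm]

end

section
variable {k B : Type*} [CommRing k] (deg : B → ℤ) (m : B → B → (B →₀ k))

lemma ite_factor (P : Prop) (X : k) : (if P then X else 0) = (if P then 1 else 0) * X := by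
  split <;> simp

lemma single_cons_apply (b c : B) (q1 u' : List B) :
    (Finsupp.single (b :: q1) (1:k)) (c :: u')
      = (if c = b then (1:k) else 0) * (if q1 = u' then 1 else 0) := by
  rw [Finsupp.single_apply]
  by_cases h1 : c = b <;> by_cases h2 : q1 = u' <;>
    simp [h1, h2, List.cons_eq_cons] <;> tauto

lemma sk_id1 (db da dx dq1 : ℤ) :
    (sk (db * (da + dx)) : k) * sk ((da + dx) * dq1) = sk ((da + dx) * (db + dq1)) := by
  rw [← sk_add]
  exact sk_eq_sk (by rw [show db * (da + dx) + (da + dx) * dq1 - (da + dx) * (db + dq1) = 0 by ring]; exact Even.zero)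

lemma sk_id2 (db da dx dp1 dp2 dq1 : ℤ) (h : dp1 + dp2 = dx) :
    (sk (db * (da + dx)) : k) * sk (dp2 * dq1)
      = sk (dp2 * (db + dq1)) * sk (db * (da + dp1)) := by
  rw [← sk_add, ← sk_add]
  exact sk_eq_sk (by
    rw [show db * (da + dx) + dp2 * dq1 - (dp2 * (db + dq1) + db * (da + dp1)) = 0 by
      linear_combination (-db) * h]
    exact Even.zero)

lemma sk_id3 (db dx dp1 dp2 dq1 : ℤ) (h : dp1 + dp2 = dx) :
    (sk (db * dx) : k) * sk (dp2 * dq1)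
      = sk (dp2 * (db + dq1)) * sk (db * dp1) := by
  rw [← sk_add, ← sk_add]
  exact sk_eq_sk (by
    rw [show db * dx + dp2 * dq1 - (dp2 * (db + dq1) + db * dp1) = 0 by
      linear_combination (-db) * h]
    exact Even.zero)

lemma LS_Spl_fst_nil (x : List B) (F : List B × List B → k)
    (h : ∀ p ∈ Spl x, p.1 ≠ [] → F p = 0) : LS (Spl x) F = F ([], x) := by
  cases x with
  | nil => simp [Spl]
  | cons a x' =>
    simp only [Spl, LS_cons, LS_map]
    have : LS (Spl x') (F ∘ fun p => (a :: p.1, p.2)) = 0 := by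
      refine (LS_congr ?_).trans (LS_zero _)
      intro p hp
      exact h _ (List.mem_cons_of_mem _ (List.mem_map_of_mem hp)) (by simp)
    rw [this, add_zero]

lemma Sg_u_nil (x y v : List B) :
    Sg deg (pathProd k deg m) x y [] v = pathProd k deg m x y v := by
  rw [Sg]
  rw [LS_Spl_fst_nil x _ ?h1]
  case h1 =>
    intro p _ hp1
    refine (LS_congr ?_).trans (LS_zero _)
    intro q _
    rw [P_apply_nil, if_neg (by tauto)]
    simp
  rw [LS_Spl_fst_nil y _ ?h2]
  case h2 =>
    intro q _ hq1
    rw [P_apply_nil, if_neg (by tauto)]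
    simp
  show (sk (degW deg x * degW deg ([] : List B)) : k) *
      (pathProd k deg m [] [] [] * pathProd k deg m x y v) = _
  rw [P_apply_nil, degW_nil, mul_zero, sk_zero, if_pos ⟨rfl, rfl⟩]
  ring

end

section
variable {k B : Type*} [CommRing k] (deg : B → ℤ) (m : B → B → (B →₀ k))

lemma MAIN_step (a b c : B) (x' y' u' v : List B)
    (IH1 : ∀ u v : List B, pathProd k deg m x' (b::y') (u ++ v)
      = Sg deg (pathProd k deg m) x' (b::y') u v)
    (IH2 : ∀ u v : List B, pathProd k deg m (a::x') y' (u ++ v)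
      = Sg deg (pathProd k deg m) (a::x') y' u v)
    (IH3 : ∀ u v : List B, pathProd k deg m x' y' (u ++ v)
      = Sg deg (pathProd k deg m) x' y' u v) :
    pathProd k deg m (a::x') (b::y') ((c :: u') ++ v)
      = Sg deg (pathProd k deg m) (a::x') (b::y') (c :: u') v := by
  set T1 : k := LS (Spl x') (fun p' => (if c = a then (1:k) else 0) *
      ((if p'.1 = u' then (1:k) else 0) * pathProd k deg m p'.2 (b::y') v)) with hT1
  set T2 : k := LS (Spl y') (fun q' =>
      (sk (degW deg (a::x') * degW deg (b::q'.1)) : k) *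
      ((if c = b then (1:k) else 0) *
        ((if q'.1 = u' then (1:k) else 0) * pathProd k deg m (a::x') q'.2 v))) with hT2
  set T3a : k := LS (Spl x') (fun p' => LS (Spl y') (fun q' =>
      (sk (degW deg p'.2 * degW deg (b::q'.1)) : k) *
        ((if c = a then (1:k) else 0) *
          (pathProd k deg m p'.1 (b::q'.1) u' * pathProd k deg m p'.2 q'.2 v)))) with hT3a
  set T3b : k := LS (Spl x') (fun p' => LS (Spl y') (fun q' =>
      (sk (degW deg p'.2 * degW deg (b::q'.1)) : k) *
        ((sk (deg b * (deg a + degW deg p'.1)) : k) *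
          ((if c = b then (1:k) else 0) *
            (pathProd k deg m (a::p'.1) q'.1 u' * pathProd k deg m p'.2 q'.2 v))))) with hT3b
  set T3c : k := LS (Spl x') (fun p' => LS (Spl y') (fun q' =>
      (sk (degW deg p'.2 * degW deg (b::q'.1)) : k) *
        ((sk (deg b * degW deg p'.1) : k) *
          ((m a b) c *
            (pathProd k deg m p'.1 q'.1 u' * pathProd k deg m p'.2 q'.2 v))))) with hT3c
  have L : pathProd k deg m (a::x') (b::y') ((c :: u') ++ v)
      = (if c = a then (1:k) else 0) * Sg deg (pathProd k deg m) x' (b::y') u' v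
        + (sk (deg b * (deg a + degW deg x')) : k) *
            ((if c = b then (1:k) else 0) * Sg deg (pathProd k deg m) (a::x') y' u' v)
        + (sk (deg b * degW deg x') : k) *
            ((m a b) c * Sg deg (pathProd k deg m) x' y' u' v) := by
    show pathProd k deg m (a::x') (b::y') (c :: (u' ++ v)) = _
    rw [P_cons_cons_apply, ite_factor (c = a), ite_factor (c = b), IH1, IH2, IH3]
    try ring
  have E1 : (if c = a then (1:k) else 0) * Sg deg (pathProd k deg m) x' (b::y') u' v
      = T1 + T3a := by
    rw [Sg]
    simp only [Spl, LS_cons, LS_map, LS_nil, add_zero]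
    rw [← LS_mul_left, hT1, hT3a, ← LS_add]
    apply LS_congr
    intro p' _
    try simp only [Function.comp_apply]
    rw [mul_add ((if c = a then (1:k) else 0))]
    congr 1
    · rw [degW_nil, mul_zero, sk_zero, P_nil_right, Finsupp.single_apply]
      ring
    · rw [← LS_mul_left]
      apply LS_congr
      intro q' _
      try simp only [Function.comp_apply]
      ring
  have E2 : (sk (deg b * (deg a + degW deg x')) : k) *
        ((if c = b then (1:k) else 0) * Sg deg (pathProd k deg m) (a::x') y' u' v)
      = T2 + T3b := by
    rw [Sg]
    simp only [Spl, LS_cons, LS_map, LS_nil, add_zero]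
    rw [mul_add ((if c = b then (1:k) else 0)),
      mul_add ((sk (deg b * (deg a + degW deg x')) : k)), hT2, hT3b]
    congr 1
    · rw [← LS_mul_left, ← LS_mul_left]
      apply LS_congr
      intro q' _
      try simp only [Function.comp_apply]
      rw [P_nil_left, Finsupp.single_apply]
      have hs : (sk (deg b * (deg a + degW deg x')) : k) *
          sk (degW deg (a::x') * degW deg q'.1)
          = sk (degW deg (a::x') * degW deg (b::q'.1)) := by
        rw [degW_cons deg b q'.1, degW_cons deg a x']
        exact sk_id1 (deg b) (deg a) (degW deg x') (degW deg q'.1)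
      linear_combination ((if c = b then (1:k) else 0) *
        ((if q'.1 = u' then (1:k) else 0) * pathProd k deg m (a::x') q'.2 v)) * hs
    · rw [← LS_mul_left, ← LS_mul_left]
      apply LS_congr
      intro p' hp'
      try simp only [Function.comp_apply]
      rw [← LS_mul_left, ← LS_mul_left]
      apply LS_congr
      intro q' _
      try simp only [Function.comp_apply]
      have hs : (sk (deg b * (deg a + degW deg x')) : k) *
          sk (degW deg p'.2 * degW deg q'.1)
          = sk (degW deg p'.2 * degW deg (b::q'.1)) *
            sk (deg b * (deg a + degW deg p'.1)) := by
        rw [degW_cons deg b q'.1]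
        exact sk_id2 (deg b) (deg a) (degW deg x') (degW deg p'.1) (degW deg p'.2)
          (degW deg q'.1) (Spl_degW deg hp')
      linear_combination ((if c = b then (1:k) else 0) *
        (pathProd k deg m (a::p'.1) q'.1 u' * pathProd k deg m p'.2 q'.2 v)) * hs
  have E3 : (sk (deg b * degW deg x') : k) *
        ((m a b) c * Sg deg (pathProd k deg m) x' y' u' v)
      = T3c := by
    rw [Sg, hT3c, ← LS_mul_left, ← LS_mul_left]
    apply LS_congr
    intro p' hp'
    try simp only [Function.comp_apply]
    rw [← LS_mul_left, ← LS_mul_left]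
    apply LS_congr
    intro q' _
    try simp only [Function.comp_apply]
    have hs : (sk (deg b * degW deg x') : k) * sk (degW deg p'.2 * degW deg q'.1)
        = sk (degW deg p'.2 * degW deg (b::q'.1)) * sk (deg b * degW deg p'.1) := by
      rw [degW_cons deg b q'.1]
      exact sk_id3 (deg b) (degW deg x') (degW deg p'.1) (degW deg p'.2)
        (degW deg q'.1) (Spl_degW deg hp')
    linear_combination ((m a b) c *
      (pathProd k deg m p'.1 q'.1 u' * pathProd k deg m p'.2 q'.2 v)) * hs
  have R : Sg deg (pathProd k deg m) (a::x') (b::y') (c :: u') v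
      = T2 + (T1 + (T3a + T3b + T3c)) := by
    rw [Sg]
    simp only [Spl, LS_cons, LS_map, LS_nil, add_zero]
    have hA : (sk (degW deg (a::x') * degW deg ([] : List B)) : k) *
        (pathProd k deg m [] [] (c :: u') *
          pathProd k deg m (a::x') (b::y') v) = 0 := by
      rw [P_nil_left, Finsupp.single_apply, if_neg (by simp)]
      ring
    rw [hA, zero_add, hT1, hT2, hT3a, hT3b, hT3c, ← LS_add, ← LS_add, ← LS_add]
    congr 1
    · apply LS_congr
      intro q' _
      try simp only [Function.comp_apply]
      rw [P_nil_left, single_cons_apply]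
      ring
    · apply LS_congr
      intro p' _
      try simp only [Function.comp_apply]
      rw [← LS_add, ← LS_add]
      congr 1
      · rw [P_nil_right, single_cons_apply, degW_nil, mul_zero, sk_zero]
        ring
      · apply LS_congr
        intro q' _
        try simp only [Function.comp_apply]
        rw [P_cons_cons_apply, ite_factor (c = a), ite_factor (c = b)]
        ring
  rw [L, E1, E2, E3, R]
  ring

end

section
variable {k B : Type*} [CommRing k] (deg : B → ℤ) (m : B → B → (B →₀ k))

lemma MAIN : ∀ (n : ℕ) (x y : List B), x.length + y.length ≤ n → ∀ u v : List B,
    pathProd k deg m x y (u ++ v) = Sg deg (pathProd k deg m) x y u v := by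
  intro n
  induction n with
  | zero =>
    intro x y h u v
    match x, y with
    | [], y => exact MAIN_nil_left deg m y u v
    | a::x', y => simp at h
  | succ n ih =>
    intro x y h u v
    match x, y with
    | [], y => exact MAIN_nil_left deg m y u v
    | a::x', [] => exact MAIN_nil_right deg m a x' u v
    | a::x', b::y' =>
      cases u with
      | nil =>
        rw [List.nil_append, Sg_u_nil]
      | cons c u' =>
        apply MAIN_step deg m a b c x' y' u' v
        · intro u v
          exact ih x' (b::y') (by simp at h ⊢; omega) u v
        · intro u v
          exact ih (a::x') y' (by simp at h ⊢; omega) u v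
        · intro u v
          exact ih x' y' (by simp at h ⊢; omega) u v

lemma coalg_pointwise {μ : List B → List B → (List B →₀ k)}
    (hμ : ∀ x y : List B, deconcatF (μ x y)
      = pairProd deg μ (deconcatF (Finsupp.single x 1)) (deconcatF (Finsupp.single y 1))) :
    ∀ x y u v : List B, μ x y (u ++ v) = Sg deg μ x y u v := by
  intro x y u v
  have h := DFunLike.congr_fun (hμ x y) (u, v)
  rw [deconcatF_apply, deconcatF_single, deconcatF_single, pairProd_deconcat_apply] at h
  exact h

lemma P_coalg (x y : List B) : deconcatF (pathProd k deg m x y)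
    = pairProd deg (pathProd k deg m)
        (deconcatF (Finsupp.single x 1)) (deconcatF (Finsupp.single y 1)) := by
  ext p
  obtain ⟨u, v⟩ := p
  rw [deconcatF_single, deconcatF_single, deconcatF_apply, pairProd_deconcat_apply]
  exact MAIN deg m (x.length + y.length) x y le_rfl u v

lemma P_lift_none (x y : List B) :
    pathProd k deg m x y [] = projMul m x y none := by
  rw [P_apply_nil]
  match x, y with
  | [], [] => show _ = Finsupp.single none 1 none; simp
  | [], [b] => show _ = Finsupp.single (some b) 1 none; simp
  | [], b1::b2::ys => show _ = (0 : Option B →₀ k) none; simp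
  | [a], [] => show _ = Finsupp.single (some a) 1 none; simp
  | a1::a2::xs, [] => show _ = (0 : Option B →₀ k) none; simp
  | [a], [b] =>
    show _ = ((m a b).mapDomain some) none
    rw [Finsupp.mapDomain_notin_range _ _ (by rintro ⟨t, ht⟩; simp at ht)]
    simp
  | [a], b1::b2::ys => show _ = (0 : Option B →₀ k) none; simp
  | a1::a2::xs, [b] => show _ = (0 : Option B →₀ k) none; simp
  | a1::a2::xs, b1::b2::ys => show _ = (0 : Option B →₀ k) none; simp

lemma P_lift_some (x y : List B) (c : B) :
    pathProd k deg m x y [c] = projMul m x y (some c) := by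
  match x, y with
  | [], [] =>
    rw [P_nil_left]
    show _ = Finsupp.single none 1 (some c)
    simp [Finsupp.single_apply]
  | [], [b] =>
    rw [P_nil_left]
    show _ = Finsupp.single (some b) 1 (some c)
    simp [Finsupp.single_apply, List.cons_eq_cons]
  | [], b1::b2::ys =>
    rw [P_nil_left]
    show _ = (0 : Option B →₀ k) (some c)
    simp [Finsupp.single_apply]
  | [a], [] =>
    rw [P_nil_right]
    show _ = Finsupp.single (some a) 1 (some c)
    simp [Finsupp.single_apply, List.cons_eq_cons]
  | a1::a2::xs, [] =>
    rw [P_nil_right]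
    show _ = (0 : Option B →₀ k) (some c)
    simp [Finsupp.single_apply]
  | [a], [b] =>
    have h : pathProd k deg m [a] [b] [c] = (m a b) c := by
      rw [show ([c] : List B) = c :: [] from rfl, P_cons_cons_apply]
      rw [P_apply_nil, P_apply_nil, P_apply_nil]
      simp [degW_nil, sk_zero]
    rw [h]
    show _ = ((m a b).mapDomain some) (some c)
    rw [Finsupp.mapDomain_apply (Option.some_injective B)]
  | [a], b1::b2::ys =>
    show _ = (0 : Option B →₀ k) (some c)
    rw [show ([c] : List B) = c :: [] from rfl, P_cons_cons_apply]
    rw [P_apply_nil, P_apply_nil, P_apply_nil]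
    simp
  | a1::a2::xs, b::ys =>
    show _ = (0 : Option B →₀ k) (some c)
    rw [show ([c] : List B) = c :: [] from rfl, P_cons_cons_apply]
    rw [P_apply_nil, P_apply_nil, P_apply_nil]
    simp

end

section
variable {k B : Type*} [CommRing k] (deg : B → ℤ) (m : B → B → (B →₀ k))

lemma P_unique {μ : List B → List B → (List B →₀ k)}
    (hc : ∀ x y : List B, deconcatF (μ x y)
      = pairProd deg μ (deconcatF (Finsupp.single x 1)) (deconcatF (Finsupp.single y 1)))
    (hl : ∀ x y : List B, (μ x y) [] = (projMul m x y) none ∧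
      ∀ c : B, (μ x y) [c] = (projMul m x y) (some c)) :
    ∀ (N : ℕ) (x y w : List B), x.length + y.length + w.length ≤ N →
      μ x y w = pathProd k deg m x y w := by
  intro N
  induction N with
  | zero =>
    intro x y w h
    match w with
    | [] => rw [(hl x y).1, P_lift_none]
    | c::t => simp at h
  | succ N ih =>
    intro x y w h
    match w with
    | [] => rw [(hl x y).1, P_lift_none]
    | [c] => rw [(hl x y).2 c, P_lift_some]
    | c::t1::ts =>
      show μ x y ([c] ++ (t1::ts)) = pathProd k deg m x y ([c] ++ (t1::ts))
      rw [coalg_pointwise deg hc x y [c] (t1::ts),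
        MAIN deg m (x.length + y.length) x y le_rfl [c] (t1::ts), Sg, Sg]
      apply LS_congr
      intro p hp
      apply LS_congr
      intro q hq
      have e1 : μ p.1 q.1 [c] = pathProd k deg m p.1 q.1 [c] := by
        rw [(hl p.1 q.1).2 c, P_lift_some]
      have e2 : μ p.2 q.2 (t1::ts) = pathProd k deg m p.2 q.2 (t1::ts) := by
        apply ih
        have hx := Spl_append hp
        have hy := Spl_append hq
        have hx2 : p.2.length ≤ x.length := by
          rw [← hx]; simp
        have hy2 : q.2.length ≤ y.length := by
          rw [← hy]; simp
        simp only [List.length_cons] at h ⊢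
        omega
      rw [e1, e2]

lemma shuffle_nil_left (y : List B) : shuffle k deg [] y = Finsupp.single y 1 := by
  rw [shuffle]

lemma shuffle_nil_right (x : List B) : shuffle k deg x [] = Finsupp.single x 1 := by
  cases x <;> rw [shuffle]

lemma P_eq_shuffle (hm0 : ∀ a b, m a b = 0) :
    ∀ (n : ℕ) (x y : List B), x.length + y.length ≤ n →
      pathProd k deg m x y = shuffle k deg x y := by
  intro n
  induction n with
  | zero =>
    intro x y h
    match x, y with
    | [], y => rw [P_nil_left, shuffle_nil_left]
    | a::x', y => simp at h
  | succ n ih =>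
    intro x y h
    match x, y with
    | [], y => rw [P_nil_left, shuffle_nil_left]
    | a::x', [] => rw [P_nil_right, shuffle_nil_right]
    | a::x', b::y' =>
      rw [P_cons_cons, hm0 a b, Finsupp.sum_zero_index, smul_zero, add_zero]
      rw [ih x' (b::y') (by simp at h ⊢; omega), ih (a::x') y' (by simp at h ⊢; omega)]
      rw [shuffle]

end

theorem tensorization_product_is_path_product (k B : Type*) [CommRing k]
    (deg : B → ℤ) (m : B → B → (B →₀ k))
    -- the product of `Ā` respects degrees
    (hm : ∀ a b c, c ∈ (m a b).support → deg c = deg a + deg b) :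
    -- the path product is a morphism of coalgebras …
    (∀ x y : List B,
      deconcatF (pathProd k deg m x y)
        = pairProd deg (pathProd k deg m) (deconcatF (Finsupp.single x 1))
            (deconcatF (Finsupp.single y 1))) ∧
    -- … which lifts the multiplication of `A`
    (∀ x y : List B,
      (pathProd k deg m x y) [] = (projMul m x y) none ∧
      ∀ c : B, (pathProd k deg m x y) [c] = (projMul m x y) (some c)) ∧
    -- and it is the unique such bilinear product
    (∀ μ : List B → List B → (List B →₀ k),
      (∀ x y : List B,
        deconcatF (μ x y) = pairProd deg μ (deconcatF (Finsupp.single x 1))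
          (deconcatF (Finsupp.single y 1))) →
      (∀ x y : List B,
        (μ x y) [] = (projMul m x y) none ∧
        ∀ c : B, (μ x y) [c] = (projMul m x y) (some c)) →
      μ = pathProd k deg m) ∧
    -- when the product of `Ā` is trivial, it is the shuffle product
    ((∀ a b, m a b = 0) → pathProd k deg m = shuffle k deg) := by
  refine ⟨fun x y => P_coalg deg m x y,
    fun x y => ⟨P_lift_none deg m x y, fun c => P_lift_some deg m x y c⟩,
    fun μ hc hl => ?_, fun hm0 => ?_⟩
  · funext x y
    ext w
    exact P_unique deg m hc hl (x.length + y.length + w.length) x y w le_rfl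
  · funext x y
    exact P_eq_shuffle deg m hm0 (x.length + y.length) x y le_rfl
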